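/- Let A be a d×d lower-triangular matrix with nonnegative entries and strictly positive diagonal entries, α > 0, and Σ = A A^T. Then the iterative peeling algorithm applied along the canonical path 1 ↦ 2 ↦ … ↦ d (at each step k taking D < 1, so τ equals the appropriate scaled column, and subtracting the rank-one term) produces a matrix A_* equal to A; in particular A_* A_*^T = Σ, i.e. the algorithm yields an exact completely positive decomposition. -/
import Mathlib

open Matrix

/-- `D_1(S) = max_{j,k ≠ 1} S_{j1} S_{k1} / (S_{jk} S_{11})` (with `0` inserted so
that the maximum is well defined also in the degenerate `1 × 1` case; for matrices
with positive entries all ratios are positive, so this does not change the value). -/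
noncomputable def peelD {m : ℕ} (S : Matrix (Fin (m + 1)) (Fin (m + 1)) ℝ) : ℝ :=
  (insert (0 : ℝ)
    (((Finset.univ ×ˢ Finset.univ).filter
        (fun p : Fin (m + 1) × Fin (m + 1) => p.1 ≠ 0 ∧ p.2 ≠ 0)).image
      (fun p => S p.1 0 * S p.2 0 / (S p.1 p.2 * S 0 0)))).max' (by simp)

/-- The vector `τ` of a peeling step at index `1`:
`τ_1 = √(S_{11} max(D_1,1))`, `τ_j = S_{j1}/√(S_{11} max(D_1,1))` for `j ≠ 1`. -/
noncomputable def peelTau {m : ℕ} (S : Matrix (Fin (m + 1)) (Fin (m + 1)) ℝ) :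
    Fin (m + 1) → ℝ :=
  fun j =>
    if j = 0 then Real.sqrt (S 0 0 * max (peelD S) 1)
    else S j 0 / Real.sqrt (S 0 0 * max (peelD S) 1)

/-- The peeled remainder `S' = S^{(-1,-1)} - τ_{-1} τ_{-1}ᵀ`. -/
noncomputable def peelRem {m : ℕ} (S : Matrix (Fin (m + 1)) (Fin (m + 1)) ℝ) :
    Matrix (Fin m) (Fin m) ℝ :=
  Matrix.of fun j k => S j.succ k.succ - peelTau S j.succ * peelTau S k.succ

/-- The iterative peeling algorithm along the canonical path `1 ↦ 2 ↦ … ↦ d`: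
the first column of the output is `τ`, and the lower-right block is obtained by
applying the algorithm to the peeled remainder. -/
noncomputable def peelAlg : (m : ℕ) → Matrix (Fin m) (Fin m) ℝ → Matrix (Fin m) (Fin m) ℝ
  | 0, _ => 0
  | m + 1, S =>
      Matrix.of fun j k =>
        if hk : k = 0 then peelTau S j
        else if hj : j = 0 then 0
        else peelAlg m (peelRem S) (j.pred hj) (k.pred hk)

/-- Proposition 3.2: if `Σ = A Aᵀ` with `A` lower triangular,
nonnegative and with strictly positive diagonal, then the peeling algorithm along
the canonical path recovers `A` exactly; in particular `A_* A_*ᵀ = Σ`, an exact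
completely positive decomposition. -/
private lemma div_le_one_aux (a b : ℝ) (ha : 0 ≤ a) (h : a ≤ b) : a / b ≤ 1 := by
  rcases eq_or_lt_of_le (ha.trans h) with h0 | h0
  · simp [← h0]
  · rw [div_le_one h0]; exact h

theorem peelAlg_eq (d : ℕ) (A : Matrix (Fin d) (Fin d) ℝ)
    (htri : ∀ j k : Fin d, j < k → A j k = 0)
    (hnn : ∀ j k, 0 ≤ A j k)
    (hdiag : ∀ j, 0 < A j j) :
    peelAlg d (A * Aᵀ) = A := by
  induction d with
  | zero => ext j; exact j.elim0
  | succ m ih =>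
    set S := A * Aᵀ with hSdef
    have hS : ∀ j k, S j k = ∑ l, A j l * A k l := by
      intro j k
      simp [hSdef, Matrix.mul_apply, Matrix.transpose_apply]
    have hA0 : ∀ l : Fin (m + 1), l ≠ 0 → A 0 l = 0 :=
      fun l hl => htri 0 l (Fin.pos_of_ne_zero hl)
    have hSj0 : ∀ j, S j 0 = A j 0 * A 0 0 := by
      intro j
      rw [hS]
      refine Finset.sum_eq_single 0 (fun l _ hl => by rw [hA0 l hl, mul_zero]) (by simp)
    have hle : ∀ j k, A j 0 * A k 0 ≤ S j k := by
      intro j k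
      rw [hS]
      exact Finset.single_le_sum (fun l _ => mul_nonneg (hnn j l) (hnn k l))
        (Finset.mem_univ 0)
    have hD : peelD S ≤ 1 := by
      apply Finset.max'_le
      intro y hy
      simp only [Finset.mem_insert, Finset.mem_image, Finset.mem_filter] at hy
      rcases hy with rfl | ⟨p, _, rfl⟩
      · exact zero_le_one
      · rw [hSj0, hSj0, hSj0]
        apply div_le_one_aux
        · exact mul_nonneg (mul_nonneg (hnn _ _) (hnn _ _)) (mul_nonneg (hnn _ _) (hnn _ _))
        · have := hle p.1 p.2
          nlinarith [hnn p.1 0, hnn p.2 0, hnn (0 : Fin (m+1)) 0]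
    have hmax : max (peelD S) 1 = 1 := max_eq_right hD
    have hA00 : (0 : ℝ) < A 0 0 := hdiag 0
    have hsqrt : Real.sqrt (S 0 0 * max (peelD S) 1) = A 0 0 := by
      rw [hmax, mul_one, hSj0, Real.sqrt_mul_self hA00.le]
    have htau : ∀ j, peelTau S j = A j 0 := by
      intro j
      by_cases hj : j = 0
      · subst hj; rw [peelTau, if_pos rfl, hsqrt]
      · rw [peelTau, if_neg hj, hsqrt, hSj0]
        exact mul_div_cancel_right₀ _ hA00.ne'
    set A' : Matrix (Fin m) (Fin m) ℝ := Matrix.of fun j k => A j.succ k.succ with hA'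
    have hrem : peelRem S = A' * A'ᵀ := by
      ext j k
      simp only [peelRem, Matrix.of_apply, htau, hS, Matrix.mul_apply,
        Matrix.transpose_apply, hA', Fin.sum_univ_succ]
      ring
    have ih' : peelAlg m (peelRem S) = A' := by
      rw [hrem]
      exact ih A' (fun j k h => htri _ _ (Fin.succ_lt_succ_iff.mpr h))
        (fun j k => hnn _ _) (fun j => hdiag _)
    show peelAlg (m + 1) S = A
    ext j k
    show (Matrix.of fun j k =>
        if hk : k = 0 then peelTau S j
        else if hj : j = 0 then 0
        else peelAlg m (peelRem S) (j.pred hj) (k.pred hk)) j k = A j k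
    simp only [Matrix.of_apply]
    split_ifs with hk hj
    · subst hk; exact htau j
    · subst hj; exact (htri 0 k (Fin.pos_of_ne_zero hk)).symm
    · rw [ih']
      simp [hA']

theorem peelAlg_recovers_lowerTriangular (d : ℕ)
    (A : Matrix (Fin d) (Fin d) ℝ)
    (htri : ∀ j k : Fin d, j < k → A j k = 0)
    (hnn : ∀ j k, 0 ≤ A j k)
    (hdiag : ∀ j, 0 < A j j) :
    peelAlg d (A * Aᵀ) = A ∧ peelAlg d (A * Aᵀ) * (peelAlg d (A * Aᵀ))ᵀ = A * Aᵀ := by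
  have h := peelAlg_eq d A htri hnn hdiag
  exact ⟨h, by rw [h]⟩
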